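/- For a right-angled hexagon in hyperbolic 3-space with ordered side widths H_1,...,H_6 (complex widths of the successive double crosses), the law of sines holds: sinh(H_1)/sinh(H_4) = sinh(H_3)/sinh(H_6) = sinh(H_5)/sinh(H_2). -/

import Mathlib

open Complex

/-- The cross ratio `R(a,b,c,d) = ((a−c)(b−d))/((a−d)(b−c))`. -/
noncomputable def crossRatio (a b c d : ℂ) : ℂ :=
  ((a - c) * (b - d)) / ((a - d) * (b - c))

/-- Two geodesics of `H³`, recorded by their (finite) ideal endpoints, are
perpendicular iff the cross ratio of their endpoints is `−1`. -/
def Perp (u u' w w' : ℂ) : Prop := crossRatio u u' w w' = -1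

/-- A right-angled hexagon in `H³`: a cyclically ordered 6-tuple of oriented
geodesics `γ i = (u_i, u'_i)` (recorded by their ideal endpoints, in generic
position so all endpoints are distinct), with consecutive geodesics orthogonal
and non-adjacent geodesics distinct, together with complex side widths `H i`
defined by the double-cross cross-ratio formula
`e^{H i} = R(u_{i−1}, u_{i+1}, u'_i, u_i)` (widths of `(γ_{i−1}, γ_{i+1}; γ_i)`). -/
structure RightAngledHexagon where
  γ : Fin 6 → ℂ × ℂ
  H : Fin 6 → ℂ
  endpoints_distinct : Function.Injective (fun p : Fin 6 × Bool =>
    if p.2 then (γ p.1).2 else (γ p.1).1)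
  nonadjacent_distinct : ∀ i : Fin 6, γ i ≠ γ (i + 2)
  perp : ∀ i : Fin 6, Perp (γ i).1 (γ i).2 (γ (i + 1)).1 (γ (i + 1)).2
  width : ∀ i : Fin 6, Complex.exp (H i) =
    crossRatio (γ (i - 1)).1 (γ (i + 1)).1 (γ i).2 (γ i).1

/-- `Tt a x b y c z` is the trace of the product of the three half-turn
matrices of the geodesics `(a,x)`, `(b,y)`, `(c,z)`. -/
noncomputable def Tt (a x b y c z : ℂ) : ℂ :=
  -4*y*c*z - 4*b*c*z + 4*b*y*z + 4*b*y*c + 4*x*c*z - 4*x*b*y + 4*a*c*z - 4*a*b*y - 4*a*x*z - 4*a*x*c + 4*a*x*y + 4*a*x*b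

/-- `sinh` of the width of a double cross, via the trace `Tt`. -/
lemma key_lemma (Hh a x b y c z : ℂ)
    (h1 : 2*a*x + 2*b*y - (a+x)*(b+y) = 0)
    (h2 : 2*b*y + 2*c*z - (b+y)*(c+z) = 0)
    (hab : a ≠ b) (hay : a ≠ y) (hcb : c ≠ b) (hcy : c ≠ y)
    (hexp : Complex.exp Hh = crossRatio a c y b) :
    Complex.sinh Hh * (2*(a-x)*(b-y)*(c-z)) = -Tt a x b y c z := by
  have hA : (a-y)*(c-b) ≠ 0 :=
    mul_ne_zero (sub_ne_zero.mpr hay) (sub_ne_zero.mpr hcb)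
  have hB : (a-b)*(c-y) ≠ 0 :=
    mul_ne_zero (sub_ne_zero.mpr hab) (sub_ne_zero.mpr hcy)
  have e1 : Complex.sinh Hh * (2*((a-b)*(c-y))*((a-y)*(c-b)))
      = ((a-y)*(c-b))^2 - ((a-b)*(c-y))^2 := by
    rw [show Complex.sinh Hh = (Complex.exp Hh - Complex.exp (-Hh))/2 from rfl,
      Complex.exp_neg, hexp]
    rw [show crossRatio a c y b = ((a-y)*(c-b))/((a-b)*(c-y)) from rfl, inv_div]
    field_simp
  refine mul_right_cancel₀ (mul_ne_zero hA hB) ?_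
  unfold Tt
  linear_combination ((a-x)*(b-y)*(c-z))*e1 + (-y*c*c*c*z + (5/2)*y*y*c*c*z - (1/2)*y*y*c*c*c - y*y*y*c*z - (1/2)*y*y*y*c*c + (1/4)*y*y*y*y*z + (1/4)*y*y*y*y*c - b*c*c*c*z - b*y*c*c*z + b*y*c*c*c + (3/2)*b*y*y*c*c - (1/2)*b*y*y*y*z + (1/2)*b*y*y*y*c - (1/2)*b*y*y*y*y + (5/2)*b*b*c*c*z - (1/2)*b*b*c*c*c + (3/2)*b*b*y*c*c + (1/2)*b*b*y*y*z - (11/2)*b*b*y*y*c + (3/2)*b*b*y*y*y - b*b*b*c*z - (1/2)*b*b*b*c*c - (1/2)*b*b*b*y*z + (1/2)*b*b*b*y*c + (3/2)*b*b*b*y*y + (1/4)*b*b*b*b*z + (1/4)*b*b*b*b*c - (1/2)*b*b*b*b*y + 2*a*c*c*c*z - a*y*c*c*z + a*y*c*c*c - 2*a*y*y*c*z - a*y*y*c*c + (1/2)*a*y*y*y*z + (1/2)*a*y*y*y*c - a*b*c*c*z + a*b*c*c*c + 2*a*b*y*c*z - 8*a*b*y*c*c + (1/2)*a*b*y*y*z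 + (13/2)*a*b*y*y*c - a*b*y*y*y - 2*a*b*b*c*z - a*b*b*c*c + (1/2)*a*b*b*y*z + (13/2)*a*b*b*y*c - 4*a*b*b*y*y + (1/2)*a*b*b*b*z + (1/2)*a*b*b*b*c - a*b*b*b*y - 2*a*a*c*c*z - 2*a*a*c*c*c + 2*a*a*y*c*z + 4*a*a*y*c*c - 2*a*a*y*y*c + 2*a*a*b*c*z + 4*a*a*b*c*c - 2*a*a*b*y*z - 6*a*a*b*y*c + 2*a*a*b*y*y - 2*a*a*b*b*c + 2*a*a*b*b*y)*h1 + (-b*y*y*c*c - b*y*y*y*c + (1/2)*b*y*y*y*y - b*b*y*c*c + 6*b*b*y*y*c - (3/2)*b*b*y*y*y - b*b*b*y*c - (3/2)*b*b*b*y*y + (1/2)*b*b*b*b*y - (1/2)*x*y*y*c*c + (1/2)*x*y*y*y*c - (1/4)*x*y*y*y*y + x*b*y*c*c - (1/2)*x*b*y*y*c + (1/2)*x*b*y*y*y - (1/2)*x*b*b*c*c - (1/2)*x*b*b*y*c - (1/2)*x*b*b*y*y + (1/2)*x*b*b*b*c + (1/2)*x*b*b*b*y - (1/4)*x*b*b*b*b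 + (3/2)*a*y*y*c*c + (1/2)*a*y*y*y*c - (1/4)*a*y*y*y*y + 3*a*b*y*c*c - (13/2)*a*b*y*y*c + (3/2)*a*b*y*y*y + (3/2)*a*b*b*c*c - (13/2)*a*b*b*y*c + (7/2)*a*b*b*y*y + (1/2)*a*b*b*b*c + (3/2)*a*b*b*b*y - (1/4)*a*b*b*b*b - 3*a*a*y*c*c + a*a*y*y*c - (1/2)*a*a*y*y*y - 3*a*a*b*c*c + 10*a*a*b*y*c - (5/2)*a*a*b*y*y + a*a*b*b*c - (5/2)*a*a*b*b*y - (1/2)*a*a*b*b*b + 2*a*a*a*c*c - 2*a*a*a*y*c + a*a*a*y*y - 2*a*a*a*b*c + a*a*a*b*b)*h2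

/-- The key trace-product identity behind the law of sines. -/
lemma trprod (a x b y c z g w : ℂ)
    (h45 : 2*g*w + 2*a*x - (g+w)*(a+x) = 0)
    (h50 : 2*a*x + 2*b*y - (a+x)*(b+y) = 0)
    (h01 : 2*b*y + 2*c*z - (b+y)*(c+z) = 0) :
    Tt a x b y c z * Tt g w a x b y
      = -2*(b-y)^2*(a-x)^2*(2*(c+z)*(g+w) - 4*c*z - 4*g*w) := by
  unfold Tt
  linear_combination (10*c*z*w*w - 32*c*z*g*w + 10*c*z*g*g - 2*c*z*z*w - 2*c*z*z*g + 2*c*z*z*z - 2*c*c*z*w - 2*c*c*z*g + 2*c*c*c*z - 5*y*z*w*w + 16*y*z*g*w - 5*y*z*g*g + y*z*z*w + y*z*z*g - y*z*z*z - 5*y*c*w*w + 16*y*c*g*w - 5*y*c*g*g + 2*y*c*z*w + 2*y*c*z*g + 7*y*c*z*z + y*c*c*w + y*c*c*g + 7*y*c*c*z - y*c*c*c - 4*y*y*z*z - 4*y*y*c*c - 5*b*z*w*w + 16*b*z*g*w - 5*b*z*g*g + b*z*z*w + b*z*z*g - b*z*z*z - 5*b*c*w*w + 16*b*c*g*w -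 5*b*c*g*g + 2*b*c*z*w + 2*b*c*z*g + 7*b*c*z*z + b*c*c*w + b*c*c*g + 7*b*c*c*z - b*c*c*c + 10*b*y*w*w - 32*b*y*g*w + 10*b*y*g*g + 6*b*y*z*w + 6*b*y*z*g - 6*b*y*z*z + 6*b*y*c*w + 6*b*y*c*g - 48*b*y*c*z - 6*b*y*c*c - 8*b*y*y*w - 8*b*y*y*g + 8*b*y*y*z + 8*b*y*y*c - 4*b*b*z*z - 4*b*b*c*c - 8*b*b*y*w - 8*b*b*y*g + 8*b*b*y*z + 8*b*b*y*c + 16*b*b*y*y + 8*x*c*z*w + 8*x*c*z*g - 8*x*c*z*z - 8*x*c*c*z - 8*x*y*z*w - 8*x*y*z*g + 4*x*y*z*z - 8*x*y*c*w - 8*x*y*c*g + 8*x*y*c*z + 4*x*y*c*c + 4*x*y*y*w + 4*x*y*y*g - 8*x*b*z*w - 8*x*b*z*g + 4*x*b*z*z - 8*x*b*c*w - 8*x*b*c*g + 8*x*b*c*z + 4*x*b*c*c + 16*x*b*y*w + 16*x*b*y*g + 8*x*b*y*z + 8*x*b*y*c - 16*x*b*y*y + 4*x*b*b*w + 4*x*b*b*g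 - 16*x*b*b*y + 8*a*c*z*w + 8*a*c*z*g - 8*a*c*z*z - 8*a*c*c*z - 8*a*y*z*w - 8*a*y*z*g + 4*a*y*z*z - 8*a*y*c*w - 8*a*y*c*g + 8*a*y*c*z + 4*a*y*c*c + 4*a*y*y*w + 4*a*y*y*g - 8*a*b*z*w - 8*a*b*z*g + 4*a*b*z*z - 8*a*b*c*w - 8*a*b*c*g + 8*a*b*c*z + 4*a*b*c*c + 16*a*b*y*w + 16*a*b*y*g + 8*a*b*y*z + 8*a*b*y*c - 16*a*b*y*y + 4*a*b*b*w + 4*a*b*b*g - 16*a*b*b*y + 8*a*x*z*w + 8*a*x*z*g + 8*a*x*c*w + 8*a*x*c*g - 8*a*x*y*w - 8*a*x*y*g - 8*a*x*y*z - 8*a*x*y*c + 8*a*x*y*y - 8*a*x*b*w - 8*a*x*b*g - 8*a*x*b*z - 8*a*x*b*c + 16*a*x*b*y + 8*a*x*b*b)*h45 + (-8*z*g*w*w - 8*z*g*g*w - 8*c*g*w*w - 8*c*g*g*w + 64*c*z*g*w - 8*c*z*z*w - 8*c*z*z*g - 8*c*c*z*w - 8*c*c*z*g + 8*y*g*w*w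 + 8*y*g*g*w - 16*y*z*g*w + 4*y*z*z*w + 4*y*z*z*g - 16*y*c*g*w + 4*y*c*c*w + 4*y*c*c*g + 8*b*g*w*w + 8*b*g*g*w - 16*b*z*g*w + 4*b*z*z*w + 4*b*z*z*g - 16*b*c*g*w + 4*b*c*c*w + 4*b*c*c*g + 4*x*z*w*w + 4*x*z*g*g + 4*x*c*w*w + 4*x*c*g*g - 16*x*c*z*w - 16*x*c*z*g + 8*x*c*z*z + 8*x*c*c*z - 4*x*y*w*w - 4*x*y*g*g + 4*x*y*z*w + 4*x*y*z*g - 4*x*y*z*z + 4*x*y*c*w + 4*x*y*c*g - 4*x*y*c*c - 4*x*b*w*w - 4*x*b*g*g + 4*x*b*z*w + 4*x*b*z*g - 4*x*b*z*z + 4*x*b*c*w + 4*x*b*c*g - 4*x*b*c*c + 4*a*z*w*w + 4*a*z*g*g + 4*a*c*w*w + 4*a*c*g*g - 16*a*c*z*w - 16*a*c*z*g + 8*a*c*z*z + 8*a*c*c*z - 4*a*y*w*w - 4*a*y*g*g + 4*a*y*z*w + 4*a*y*z*g - 4*a*y*z*z + 4*a*y*c*w + 4*a*y*c*g - 4*a*y*c*c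 - 4*a*b*w*w - 4*a*b*g*g + 4*a*b*z*w + 4*a*b*z*g - 4*a*b*z*z + 4*a*b*c*w + 4*a*b*c*g - 4*a*b*c*c)*h50 + (-10*g*w*w*w + 32*g*g*w*w - 10*g*g*g*w + 2*z*g*w*w + 2*z*g*g*w - 2*z*z*g*w + 2*c*g*w*w + 2*c*g*g*w - 2*c*c*g*w - 8*y*z*g*w - 8*y*c*g*w - 8*b*z*g*w - 8*b*c*g*w - 16*b*y*g*w + 8*b*y*z*w + 8*b*y*z*g + 8*b*y*c*w + 8*b*y*c*g + 5*x*w*w*w - 19*x*g*w*w - 19*x*g*g*w + 5*x*g*g*g - x*z*w*w + 6*x*z*g*w - x*z*g*g + x*z*z*w + x*z*z*g - x*c*w*w + 6*x*c*g*w - x*c*g*g + x*c*c*w + x*c*c*g + 16*x*y*g*w + 16*x*b*g*w - 8*x*b*y*z - 8*x*b*y*c + 4*x*x*w*w + 16*x*x*g*w + 4*x*x*g*g - 4*x*x*z*w - 4*x*x*z*g - 4*x*x*c*w - 4*x*x*c*g - 8*x*x*y*w - 8*x*x*y*g + 4*x*x*y*z + 4*x*x*y*c - 8*x*x*b*w -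 8*x*x*b*g + 4*x*x*b*z + 4*x*x*b*c + 8*x*x*b*y + 5*a*w*w*w - 19*a*g*w*w - 19*a*g*g*w + 5*a*g*g*g - a*z*w*w + 6*a*z*g*w - a*z*g*g + a*z*z*w + a*z*z*g - a*c*w*w + 6*a*c*g*w - a*c*g*g + a*c*c*w + a*c*c*g + 16*a*y*g*w + 16*a*b*g*w - 8*a*b*y*z - 8*a*b*y*c - 2*a*x*w*w - 2*a*x*g*g + 2*a*x*z*w + 2*a*x*z*g - 2*a*x*z*z + 2*a*x*c*w + 2*a*x*c*g - 2*a*x*c*c + 4*a*a*w*w + 16*a*a*g*w + 4*a*a*g*g - 4*a*a*z*w - 4*a*a*z*g - 4*a*a*c*w - 4*a*a*c*g - 8*a*a*y*w - 8*a*a*y*g + 4*a*a*y*z + 4*a*a*y*c - 8*a*a*b*w - 8*a*a*b*g + 4*a*a*b*z + 4*a*a*b*c + 8*a*a*b*y)*h01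

lemma main_aux (H0 H1 H2 H3 H4 H5 a0 b0 a1 b1 a2 b2 a3 b3 a4 b4 a5 b5 : ℂ)
    (hE0 : 2*a0*b0 + 2*a1*b1 - (a0+b0)*(a1+b1) = 0)
    (hE1 : 2*a1*b1 + 2*a2*b2 - (a1+b1)*(a2+b2) = 0)
    (hE2 : 2*a2*b2 + 2*a3*b3 - (a2+b2)*(a3+b3) = 0)
    (hE3 : 2*a3*b3 + 2*a4*b4 - (a3+b3)*(a4+b4) = 0)
    (hE4 : 2*a4*b4 + 2*a5*b5 - (a4+b4)*(a5+b5) = 0)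
    (hE5 : 2*a5*b5 + 2*a0*b0 - (a5+b5)*(a0+b0) = 0)
    (hw0 : Complex.exp H0 = crossRatio a5 a1 b0 a0)
    (hw1 : Complex.exp H1 = crossRatio a0 a2 b1 a1)
    (hw2 : Complex.exp H2 = crossRatio a1 a3 b2 a2)
    (hw3 : Complex.exp H3 = crossRatio a2 a4 b3 a3)
    (hw4 : Complex.exp H4 = crossRatio a3 a5 b4 a4)
    (hw5 : Complex.exp H5 = crossRatio a4 a0 b5 a5)
    (naa01 : a0 ≠ a1) (nab01 : a0 ≠ b1) (nba01 : b0 ≠ a1)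
    (naa12 : a1 ≠ a2) (nab12 : a1 ≠ b2) (nba12 : b1 ≠ a2)
    (naa23 : a2 ≠ a3) (nab23 : a2 ≠ b3) (nba23 : b2 ≠ a3)
    (naa34 : a3 ≠ a4) (nab34 : a3 ≠ b4) (nba34 : b3 ≠ a4)
    (naa45 : a4 ≠ a5) (nab45 : a4 ≠ b5) (nba45 : b4 ≠ a5)
    (naa50 : a5 ≠ a0) (nab50 : a5 ≠ b0) (nba50 : b5 ≠ a0)
    (nd0 : a0 ≠ b0) (nd1 : a1 ≠ b1) (nd2 : a2 ≠ b2) (nd3 : a3 ≠ b3) (nd4 : a4 ≠ b4) (nd5 : a5 ≠ b5)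
    (hs1 : Complex.sinh H1 ≠ 0) (hs3 : Complex.sinh H3 ≠ 0) (hs5 : Complex.sinh H5 ≠ 0) :
    Complex.sinh H0 / Complex.sinh H3 = Complex.sinh H2 / Complex.sinh H5 ∧
    Complex.sinh H2 / Complex.sinh H5 = Complex.sinh H4 / Complex.sinh H1 := by
  have k0 := key_lemma H0 a5 b5 a0 b0 a1 b1 hE5 hE0 naa50 nab50 naa01.symm nba01.symm hw0
  have k1 := key_lemma H1 a0 b0 a1 b1 a2 b2 hE0 hE1 naa01 nab01 naa12.symm nba12.symm hw1
  have k2 := key_lemma H2 a1 b1 a2 b2 a3 b3 hE1 hE2 naa12 nab12 naa23.symm nba23.symm hw2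
  have k3 := key_lemma H3 a2 b2 a3 b3 a4 b4 hE2 hE3 naa23 nab23 naa34.symm nba34.symm hw3
  have k4 := key_lemma H4 a3 b3 a4 b4 a5 b5 hE3 hE4 naa34 nab34 naa45.symm nba45.symm hw4
  have k5 := key_lemma H5 a4 b4 a5 b5 a0 b0 hE4 hE5 naa45 nab45 naa50.symm nba50.symm hw5
  have hA := trprod a5 b5 a0 b0 a1 b1 a4 b4 hE4 hE5 hE0
  have hB := trprod a2 b2 a3 b3 a4 b4 a1 b1 hE1 hE2 hE3
  have hC := trprod a1 b1 a2 b2 a3 b3 a0 b0 hE0 hE1 hE2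
  have hD := trprod a4 b4 a5 b5 a0 b0 a3 b3 hE3 hE4 hE5
  have d0 : a0 - b0 ≠ 0 := sub_ne_zero.mpr nd0
  have d1 : a1 - b1 ≠ 0 := sub_ne_zero.mpr nd1
  have d2 : a2 - b2 ≠ 0 := sub_ne_zero.mpr nd2
  have d3 : a3 - b3 ≠ 0 := sub_ne_zero.mpr nd3
  have d4 : a4 - b4 ≠ 0 := sub_ne_zero.mpr nd4
  have d5 : a5 - b5 ≠ 0 := sub_ne_zero.mpr nd5
  have hD0 : (2*(a5-b5)*(a0-b0)*(a1-b1)) ≠ 0 := mul_ne_zero (mul_ne_zero (mul_ne_zero two_ne_zero d5) d0) d1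
  have hD1 : (2*(a0-b0)*(a1-b1)*(a2-b2)) ≠ 0 := mul_ne_zero (mul_ne_zero (mul_ne_zero two_ne_zero d0) d1) d2
  have hD2 : (2*(a1-b1)*(a2-b2)*(a3-b3)) ≠ 0 := mul_ne_zero (mul_ne_zero (mul_ne_zero two_ne_zero d1) d2) d3
  have hD3 : (2*(a2-b2)*(a3-b3)*(a4-b4)) ≠ 0 := mul_ne_zero (mul_ne_zero (mul_ne_zero two_ne_zero d2) d3) d4
  have hD4 : (2*(a3-b3)*(a4-b4)*(a5-b5)) ≠ 0 := mul_ne_zero (mul_ne_zero (mul_ne_zero two_ne_zero d3) d4) d5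
  have hD5 : (2*(a4-b4)*(a5-b5)*(a0-b0)) ≠ 0 := mul_ne_zero (mul_ne_zero (mul_ne_zero two_ne_zero d4) d5) d0
  have p05 : (Complex.sinh H0 * (2*(a5-b5)*(a0-b0)*(a1-b1))) * (Complex.sinh H5 * (2*(a4-b4)*(a5-b5)*(a0-b0))) = (Tt a5 b5 a0 b0 a1 b1) * (Tt a4 b4 a5 b5 a0 b0) := by
    rw [k0, k5]; ring
  have p23 : (Complex.sinh H2 * (2*(a1-b1)*(a2-b2)*(a3-b3))) * (Complex.sinh H3 * (2*(a2-b2)*(a3-b3)*(a4-b4))) = (Tt a1 b1 a2 b2 a3 b3) * (Tt a2 b2 a3 b3 a4 b4) := by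
    rw [k2, k3]; ring
  have p21 : (Complex.sinh H2 * (2*(a1-b1)*(a2-b2)*(a3-b3))) * (Complex.sinh H1 * (2*(a0-b0)*(a1-b1)*(a2-b2))) = (Tt a1 b1 a2 b2 a3 b3) * (Tt a0 b0 a1 b1 a2 b2) := by
    rw [k2, k1]; ring
  have p45 : (Complex.sinh H4 * (2*(a3-b3)*(a4-b4)*(a5-b5))) * (Complex.sinh H5 * (2*(a4-b4)*(a5-b5)*(a0-b0))) = (Tt a3 b3 a4 b4 a5 b5) * (Tt a4 b4 a5 b5 a0 b0) := by
    rw [k4, k5]; ring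
  have q05 : Complex.sinh H0 * Complex.sinh H5 * (2*(a1-b1)*(a4-b4)) = -(2*(a1+b1)*(a4+b4) - 4*a1*b1 - 4*a4*b4) := by
    refine mul_right_cancel₀ (mul_ne_zero hD0 hD5) ?_
    linear_combination (2*(a1-b1)*(a4-b4))*p05 + (2*(a1-b1)*(a4-b4))*hA
  have q23 : Complex.sinh H2 * Complex.sinh H3 * (2*(a1-b1)*(a4-b4)) = -(2*(a1+b1)*(a4+b4) - 4*a1*b1 - 4*a4*b4) := by
    refine mul_right_cancel₀ (mul_ne_zero hD2 hD3) ?_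
    linear_combination (2*(a1-b1)*(a4-b4))*p23 + (2*(a1-b1)*(a4-b4))*hB
  have q21 : Complex.sinh H2 * Complex.sinh H1 * (2*(a0-b0)*(a3-b3)) = -(2*(a3+b3)*(a0+b0) - 4*a3*b3 - 4*a0*b0) := by
    refine mul_right_cancel₀ (mul_ne_zero hD2 hD1) ?_
    linear_combination (2*(a0-b0)*(a3-b3))*p21 + (2*(a0-b0)*(a3-b3))*hC
  have q45 : Complex.sinh H4 * Complex.sinh H5 * (2*(a0-b0)*(a3-b3)) = -(2*(a3+b3)*(a0+b0) - 4*a3*b3 - 4*a0*b0) := by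
    refine mul_right_cancel₀ (mul_ne_zero hD4 hD5) ?_
    linear_combination (2*(a0-b0)*(a3-b3))*p45 + (2*(a0-b0)*(a3-b3))*hD
  constructor
  · rw [div_eq_div_iff hs3 hs5]
    refine mul_right_cancel₀ (mul_ne_zero (mul_ne_zero two_ne_zero d1) d4) ?_
    linear_combination q05 - q23
  · rw [div_eq_div_iff hs5 hs1]
    refine mul_right_cancel₀ (mul_ne_zero (mul_ne_zero two_ne_zero d0) d3) ?_
    linear_combination q21 - q45

theorem hexagon_law_of_sines (hex : RightAngledHexagon)
    (hsinh : ∀ i : Fin 6, Complex.sinh (hex.H i) ≠ 0) :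
    Complex.sinh (hex.H 0) / Complex.sinh (hex.H 3)
      = Complex.sinh (hex.H 2) / Complex.sinh (hex.H 5) ∧
    Complex.sinh (hex.H 2) / Complex.sinh (hex.H 5)
      = Complex.sinh (hex.H 4) / Complex.sinh (hex.H 1) := by
  obtain ⟨γ, H, hdist, hnon, hperp, hwidth⟩ := hex
  have hd : ∀ (i j : Fin 6) (p q : Bool), (i, p) ≠ (j, q) →
      (if p then (γ i).2 else (γ i).1) ≠ (if q then (γ j).2 else (γ j).1) :=
    fun i j p q hne heq => hne (hdist heq)
  have naa01 : (γ 0).1 ≠ (γ 1).1 := hd 0 1 false false (by decide)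
  have nab01 : (γ 0).1 ≠ (γ 1).2 := hd 0 1 false true (by decide)
  have nba01 : (γ 0).2 ≠ (γ 1).1 := hd 0 1 true false (by decide)
  have naa12 : (γ 1).1 ≠ (γ 2).1 := hd 1 2 false false (by decide)
  have nab12 : (γ 1).1 ≠ (γ 2).2 := hd 1 2 false true (by decide)
  have nba12 : (γ 1).2 ≠ (γ 2).1 := hd 1 2 true false (by decide)
  have naa23 : (γ 2).1 ≠ (γ 3).1 := hd 2 3 false false (by decide)
  have nab23 : (γ 2).1 ≠ (γ 3).2 := hd 2 3 false true (by decide)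
  have nba23 : (γ 2).2 ≠ (γ 3).1 := hd 2 3 true false (by decide)
  have naa34 : (γ 3).1 ≠ (γ 4).1 := hd 3 4 false false (by decide)
  have nab34 : (γ 3).1 ≠ (γ 4).2 := hd 3 4 false true (by decide)
  have nba34 : (γ 3).2 ≠ (γ 4).1 := hd 3 4 true false (by decide)
  have naa45 : (γ 4).1 ≠ (γ 5).1 := hd 4 5 false false (by decide)
  have nab45 : (γ 4).1 ≠ (γ 5).2 := hd 4 5 false true (by decide)
  have nba45 : (γ 4).2 ≠ (γ 5).1 := hd 4 5 true false (by decide)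
  have naa50 : (γ 5).1 ≠ (γ 0).1 := hd 5 0 false false (by decide)
  have nab50 : (γ 5).1 ≠ (γ 0).2 := hd 5 0 false true (by decide)
  have nba50 : (γ 5).2 ≠ (γ 0).1 := hd 5 0 true false (by decide)
  have nd0 : (γ 0).1 ≠ (γ 0).2 := hd 0 0 false true (by decide)
  have nd1 : (γ 1).1 ≠ (γ 1).2 := hd 1 1 false true (by decide)
  have nd2 : (γ 2).1 ≠ (γ 2).2 := hd 2 2 false true (by decide)
  have nd3 : (γ 3).1 ≠ (γ 3).2 := hd 3 3 false true (by decide)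
  have nd4 : (γ 4).1 ≠ (γ 4).2 := hd 4 4 false true (by decide)
  have nd5 : (γ 5).1 ≠ (γ 5).2 := hd 5 5 false true (by decide)
  have hE : ∀ i : Fin 6, (γ i).1 ≠ (γ (i+1)).2 → (γ i).2 ≠ (γ (i+1)).1 →
      2*(γ i).1*(γ i).2 + 2*(γ (i+1)).1*(γ (i+1)).2
        - ((γ i).1+(γ i).2)*((γ (i+1)).1+(γ (i+1)).2) = 0 := by
    intro i h1 h2
    have hp := hperp i
    unfold Perp crossRatio at hp
    rw [div_eq_iff (mul_ne_zero (sub_ne_zero.mpr h1) (sub_ne_zero.mpr h2))] at hp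
    linear_combination hp
  have hE0 : 2*(γ 0).1*(γ 0).2 + 2*(γ 1).1*(γ 1).2 - ((γ 0).1+(γ 0).2)*((γ 1).1+(γ 1).2) = 0 := hE 0 nab01 nba01
  have hE1 : 2*(γ 1).1*(γ 1).2 + 2*(γ 2).1*(γ 2).2 - ((γ 1).1+(γ 1).2)*((γ 2).1+(γ 2).2) = 0 := hE 1 nab12 nba12
  have hE2 : 2*(γ 2).1*(γ 2).2 + 2*(γ 3).1*(γ 3).2 - ((γ 2).1+(γ 2).2)*((γ 3).1+(γ 3).2) = 0 := hE 2 nab23 nba23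
  have hE3 : 2*(γ 3).1*(γ 3).2 + 2*(γ 4).1*(γ 4).2 - ((γ 3).1+(γ 3).2)*((γ 4).1+(γ 4).2) = 0 := hE 3 nab34 nba34
  have hE4 : 2*(γ 4).1*(γ 4).2 + 2*(γ 5).1*(γ 5).2 - ((γ 4).1+(γ 4).2)*((γ 5).1+(γ 5).2) = 0 := hE 4 nab45 nba45
  have hE5 : 2*(γ 5).1*(γ 5).2 + 2*(γ 0).1*(γ 0).2 - ((γ 5).1+(γ 5).2)*((γ 0).1+(γ 0).2) = 0 := hE 5 nab50 nba50
  have hw0 : Complex.exp (H 0) = crossRatio (γ 5).1 (γ 1).1 (γ 0).2 (γ 0).1 := hwidth 0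
  have hw1 : Complex.exp (H 1) = crossRatio (γ 0).1 (γ 2).1 (γ 1).2 (γ 1).1 := hwidth 1
  have hw2 : Complex.exp (H 2) = crossRatio (γ 1).1 (γ 3).1 (γ 2).2 (γ 2).1 := hwidth 2
  have hw3 : Complex.exp (H 3) = crossRatio (γ 2).1 (γ 4).1 (γ 3).2 (γ 3).1 := hwidth 3
  have hw4 : Complex.exp (H 4) = crossRatio (γ 3).1 (γ 5).1 (γ 4).2 (γ 4).1 := hwidth 4
  have hw5 : Complex.exp (H 5) = crossRatio (γ 4).1 (γ 0).1 (γ 5).2 (γ 5).1 := hwidth 5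
  exact main_aux (H 0) (H 1) (H 2) (H 3) (H 4) (H 5) (γ 0).1 (γ 0).2 (γ 1).1 (γ 1).2 (γ 2).1 (γ 2).2 (γ 3).1 (γ 3).2 (γ 4).1 (γ 4).2 (γ 5).1 (γ 5).2 hE0 hE1 hE2 hE3 hE4 hE5 hw0 hw1 hw2 hw3 hw4 hw5 naa01 nab01 nba01 naa12 nab12 nba12 naa23 nab23 nba23 naa34 nab34 nba34 naa45 nab45 nba45 naa50 nab50 nba50 nd0 nd1 nd2 nd3 nd4 nd5 (hsinh 1) (hsinh 3) (hsinh 5)
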